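/- The function t ↦ t·(J₀(t)² + J₁(t)²) is differentiable on ℝ and its derivative at every t ∈ ℝ equals J₀(t)² − J₁(t)². -/

import Mathlib

open Real MeasureTheory intervalIntegral

/-- Bessel function of the first kind of order zero. -/
noncomputable def J0 (x : ℝ) : ℝ := (1 / π) * ∫ t in (0:ℝ)..π, Real.cos (x * Real.sin t)

/-- Bessel function of the first kind of order one. -/
noncomputable def J1 (x : ℝ) : ℝ := (1 / π) * ∫ t in (0:ℝ)..π, Real.cos (t - x * Real.sin t)

noncomputable def Abes (x : ℝ) : ℝ := ∫ t in (0:ℝ)..π, Real.cos (x * Real.sin t)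
noncomputable def Bbes (x : ℝ) : ℝ := ∫ t in (0:ℝ)..π, Real.cos (t - x * Real.sin t)

lemma hasDerivAt_Abes (x : ℝ) :
    HasDerivAt Abes (∫ t in (0:ℝ)..π, -(Real.sin (x * Real.sin t) * Real.sin t)) x := by
  have := (intervalIntegral.hasDerivAt_integral_of_dominated_loc_of_deriv_le
    (F := fun x t => Real.cos (x * Real.sin t))
    (F' := fun x t => -(Real.sin (x * Real.sin t) * Real.sin t))
    (x₀ := x) (a := 0) (b := π) (μ := volume) (bound := fun _ => 1) (s := Metric.ball x 1)
    (Metric.ball_mem_nhds x one_pos)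
    (Filter.Eventually.of_forall fun y =>
      (Continuous.aestronglyMeasurable (by fun_prop)))
    (Continuous.intervalIntegrable (by fun_prop) _ _)
    (Continuous.aestronglyMeasurable (by fun_prop))
    (Filter.Eventually.of_forall fun t _ y _ => by
      have h1 := Real.abs_sin_le_one (y * Real.sin t)
      have h2 := Real.abs_sin_le_one t
      simp only [norm_neg, norm_mul, Real.norm_eq_abs]
      nlinarith [abs_nonneg (Real.sin (y * Real.sin t)), abs_nonneg (Real.sin t)])
    (Continuous.intervalIntegrable continuous_const _ _)
    (Filter.Eventually.of_forall fun t _ y _ => by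
      have : HasDerivAt (fun y : ℝ => y * Real.sin t) (Real.sin t) y := by
        simpa using (hasDerivAt_id y).mul_const (Real.sin t)
      simpa [mul_comm, Function.comp_def] using (Real.hasDerivAt_cos (y * Real.sin t)).comp y this))
  exact this.2

lemma hasDerivAt_Bbes (x : ℝ) :
    HasDerivAt Bbes (∫ t in (0:ℝ)..π, Real.sin (t - x * Real.sin t) * Real.sin t) x := by
  have := (intervalIntegral.hasDerivAt_integral_of_dominated_loc_of_deriv_le
    (F := fun x t => Real.cos (t - x * Real.sin t))
    (F' := fun x t => Real.sin (t - x * Real.sin t) * Real.sin t)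
    (x₀ := x) (a := 0) (b := π) (μ := volume) (bound := fun _ => 1) (s := Metric.ball x 1)
    (Metric.ball_mem_nhds x one_pos)
    (Filter.Eventually.of_forall fun y =>
      (Continuous.aestronglyMeasurable (by fun_prop)))
    (Continuous.intervalIntegrable (by fun_prop) _ _)
    (Continuous.aestronglyMeasurable (by fun_prop))
    (Filter.Eventually.of_forall fun t _ y _ => by
      have h1 := Real.abs_sin_le_one (t - y * Real.sin t)
      have h2 := Real.abs_sin_le_one t
      simp only [norm_mul, Real.norm_eq_abs]
      nlinarith [abs_nonneg (Real.sin (t - y * Real.sin t)), abs_nonneg (Real.sin t)])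
    (Continuous.intervalIntegrable continuous_const _ _)
    (Filter.Eventually.of_forall fun t _ y _ => by
      have h : HasDerivAt (fun y : ℝ => t - y * Real.sin t) (-Real.sin t) y := by
        simpa using ((hasDerivAt_id y).mul_const (Real.sin t)).const_sub t
      have := (Real.hasDerivAt_cos (t - y * Real.sin t)).comp y h
      simpa [mul_comm, Function.comp_def] using this))
  exact this.2

/-- reflection: ∫₀^π cos t cos(x sin t) dt = 0 -/
lemma refl_int (x : ℝ) :
    (∫ t in (0:ℝ)..π, Real.cos t * Real.cos (x * Real.sin t)) = 0 := by
  set g : ℝ → ℝ := fun t => Real.cos t * Real.cos (x * Real.sin t) with hg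
  have h1 : (∫ t in (0:ℝ)..π, g (π - t)) = ∫ t in (0:ℝ)..π, g t := by
    simpa using intervalIntegral.integral_comp_sub_left g π (a := 0) (b := π)
  have h2 : ∀ t, g (π - t) = -g t := by
    intro t
    simp [hg, Real.cos_pi_sub, Real.sin_pi_sub]
  rw [show (fun t => g (π - t)) = fun t => -g t from funext h2] at h1
  rw [intervalIntegral.integral_neg] at h1
  linarith

/-- FTC: ∫₀^π (1 - x cos t) * cos (t - x sin t) dt = 0 -/
lemma ftc_int (x : ℝ) :
    (∫ t in (0:ℝ)..π, (1 - x * Real.cos t) * Real.cos (t - x * Real.sin t)) = 0 := by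
  have key : ∀ t : ℝ, HasDerivAt (fun t => Real.sin (t - x * Real.sin t))
      ((1 - x * Real.cos t) * Real.cos (t - x * Real.sin t)) t := by
    intro t
    have h : HasDerivAt (fun t : ℝ => t - x * Real.sin t) (1 - x * Real.cos t) t := by
      simpa [Pi.sub_def] using (hasDerivAt_id t).sub ((Real.hasDerivAt_sin t).const_mul x)
    simpa [mul_comm, Function.comp_def] using (Real.hasDerivAt_sin (t - x * Real.sin t)).comp t h
  have := intervalIntegral.integral_eq_sub_of_hasDerivAt (a := 0) (b := π)
    (fun t _ => key t) (Continuous.intervalIntegrable (by fun_prop) _ _)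
  simpa [Real.sin_pi] using this

lemma Abes_deriv (x : ℝ) : HasDerivAt Abes (-Bbes x) x := by
  have h := hasDerivAt_Abes x
  have : (∫ t in (0:ℝ)..π, -(Real.sin (x * Real.sin t) * Real.sin t)) = -Bbes x := by
    have hsub : (∫ t in (0:ℝ)..π,
        (Real.cos (t - x * Real.sin t) - Real.sin (x * Real.sin t) * Real.sin t)) = 0 := by
      have heq : (∫ t in (0:ℝ)..π,
          (Real.cos (t - x * Real.sin t) - Real.sin (x * Real.sin t) * Real.sin t))
          = ∫ t in (0:ℝ)..π, Real.cos t * Real.cos (x * Real.sin t) := by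
        apply intervalIntegral.integral_congr
        intro t _; simp only []; rw [Real.cos_sub]; ring
      rw [heq]; exact refl_int x
    rw [intervalIntegral.integral_sub (Continuous.intervalIntegrable (by fun_prop) _ _)
      (Continuous.intervalIntegrable (by fun_prop) _ _)] at hsub
    unfold Bbes
    rw [intervalIntegral.integral_neg]
    linarith
  rwa [this] at h

lemma Bbes_deriv_rel (x : ℝ) :
    x * (∫ t in (0:ℝ)..π, Real.sin (t - x * Real.sin t) * Real.sin t) + Bbes x = x * Abes x := by
  have key : ∀ t : ℝ,
      x * (Real.sin (t - x * Real.sin t) * Real.sin t) + Real.cos (t - x * Real.sin t)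
        - x * Real.cos (x * Real.sin t)
      = (1 - x * Real.cos t) * Real.cos (t - x * Real.sin t) := by
    intro t
    rw [Real.cos_sub, Real.sin_sub]
    linear_combination x * Real.cos (x * Real.sin t) * Real.sin_sq_add_cos_sq t
  have h0 : (∫ t in (0:ℝ)..π,
      (x * (Real.sin (t - x * Real.sin t) * Real.sin t) + Real.cos (t - x * Real.sin t)
        - x * Real.cos (x * Real.sin t))) = 0 := by
    rw [show (fun t => x * (Real.sin (t - x * Real.sin t) * Real.sin t)
        + Real.cos (t - x * Real.sin t) - x * Real.cos (x * Real.sin t))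
      = fun t => (1 - x * Real.cos t) * Real.cos (t - x * Real.sin t) from funext key]
    exact ftc_int x
  rw [intervalIntegral.integral_sub
      ((Continuous.intervalIntegrable (by fun_prop) _ _).add
        (Continuous.intervalIntegrable (by fun_prop) _ _))
      (Continuous.intervalIntegrable (by fun_prop) _ _),
    intervalIntegral.integral_add (Continuous.intervalIntegrable (by fun_prop) _ _)
      (Continuous.intervalIntegrable (by fun_prop) _ _),
    intervalIntegral.integral_const_mul, intervalIntegral.integral_const_mul] at h0
  unfold Abes Bbes
  linarith

lemma main_deriv (x : ℝ) :
    HasDerivAt (fun t : ℝ => t * (J0 t ^ 2 + J1 t ^ 2)) (J0 x ^ 2 - J1 x ^ 2) x := by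
  have hπ : (π : ℝ) ≠ 0 := Real.pi_ne_zero
  set B' : ℝ := ∫ t in (0:ℝ)..π, Real.sin (t - x * Real.sin t) * Real.sin t with hB'
  have hA := Abes_deriv x
  have hB := hasDerivAt_Bbes x
  have hrel := Bbes_deriv_rel x
  have hJ0 : HasDerivAt J0 ((1 / π) * (-Bbes x)) x := by
    have : J0 = fun x => (1 / π) * Abes x := rfl
    rw [this]; exact hA.const_mul _
  have hJ1 : HasDerivAt J1 ((1 / π) * B') x := by
    have : J1 = fun x => (1 / π) * Bbes x := rfl
    rw [this]; exact hB.const_mul _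
  have h := ((hasDerivAt_id x).mul ((hJ0.pow 2).add (hJ1.pow 2)))
  have hJ0x : J0 x = (1 / π) * Abes x := rfl
  have hJ1x : J1 x = (1 / π) * Bbes x := rfl
  replace h : HasDerivAt (fun t : ℝ => t * (J0 t ^ 2 + J1 t ^ 2)) (1 * (J0 x ^ 2 + J1 x ^ 2) + id x * (((2:ℕ):ℝ) * J0 x ^ (2 - 1) * (1 / π * -Bbes x) + ((2:ℕ):ℝ) * J1 x ^ (2 - 1) * (1 / π * B'))) x := h
  convert h using 1
  rw [hJ0x, hJ1x]
  simp only [id_eq, pow_one]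
  push_cast
  linear_combination (-(2 * Bbes x) / π ^ 2) * hrel

/-- `t ↦ t·(J₀(t)² + J₁(t)²)` is differentiable on `ℝ` and its derivative
at every `t` equals `J₀(t)² − J₁(t)²`. -/
theorem stmt_6 :
    Differentiable ℝ (fun t : ℝ => t * (J0 t ^ 2 + J1 t ^ 2)) ∧
    ∀ t : ℝ, deriv (fun t : ℝ => t * (J0 t ^ 2 + J1 t ^ 2)) t = J0 t ^ 2 - J1 t ^ 2 := by
  exact ⟨fun x => (main_deriv x).differentiableAt, fun x => (main_deriv x).deriv⟩
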